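/- (Generalized Stone–Weierstraß, Riesz version) Let I be a Riesz ideal of C(X, ℝ) and R a strictly point-separating and nowhere-vanishing Riesz subspace of I. Then the I-closure of R is all of I. -/

import Mathlib

variable {X : Type*} [TopologicalSpace X]

def IsRieszIdeal (I : Set C(X, ℝ)) : Prop :=
  (0 : C(X, ℝ)) ∈ I ∧ (∀ f g : C(X, ℝ), f ∈ I → g ∈ I → f + g ∈ I) ∧
    (∀ (c : ℝ) (f : C(X, ℝ)), f ∈ I → c • f ∈ I) ∧
    (∀ f g : C(X, ℝ), g ∈ I → (∀ x, |f x| ≤ |g x|) → f ∈ I)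

/-- A decreasing sequence of continuous functions with pointwise infimum `0`. -/
def DecrPtwInfZero (f : ℕ → C(X, ℝ)) : Prop :=
  (∀ k, f (k + 1) ≤ f k) ∧ ∀ x, IsGLB (Set.range fun k => f k x) 0

/-- The sequence `g` is strictly `I`-convergent to `g'`. -/
def StrictConvTo (I : Set C(X, ℝ)) (g : ℕ → C(X, ℝ)) (g' : C(X, ℝ)) : Prop :=
  ∃ f : ℕ → C(X, ℝ), (∀ k, f k ∈ I) ∧ DecrPtwInfZero f ∧
    ∀ k, ∃ N, ∀ n ≥ N, ∀ x, |g' x - g n x| ≤ f k x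

/-- The sequence `g` is a strict `I`-Cauchy sequence. -/
def StrictCauchy (I : Set C(X, ℝ)) (g : ℕ → C(X, ℝ)) : Prop :=
  ∃ f : ℕ → C(X, ℝ), (∀ k, f k ∈ I) ∧ DecrPtwInfZero f ∧
    ∀ k, ∃ N, ∀ n ≥ N, ∀ x, |g n x - g N x| ≤ f k x

def IClosed (I : Set C(X, ℝ)) (S : Set C(X, ℝ)) : Prop :=
  ∀ (g : ℕ → C(X, ℝ)) (g' : C(X, ℝ)), (∀ n, g n ∈ S) → StrictConvTo I g g' → g' ∈ S

def IClosure (I : Set C(X, ℝ)) (S : Set C(X, ℝ)) : Set C(X, ℝ) :=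
  ⋂₀ {C | C ⊆ I ∧ S ⊆ C ∧ IClosed I C}

/-! ### Auxiliary real truncation lemmas -/

noncomputable def trR (b a : ℝ) : ℝ := max (min a b) (-b)

lemma trR_eq_self {b a : ℝ} (h : |a| ≤ b) : trR b a = a := by
  rw [abs_le] at h
  rw [trR, min_eq_left h.2, max_eq_left h.1]

lemma abs_trR_le {b : ℝ} (hb : 0 ≤ b) (a : ℝ) : |trR b a| ≤ b := by
  rw [abs_le]
  exact ⟨le_max_right _ _, max_le (min_le_right _ _) (by linarith)⟩

lemma abs_trR_sub_trR (b s t : ℝ) : |trR b s - trR b t| ≤ |s - t| := by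
  refine (abs_max_sub_max_le_abs _ _ _).trans ?_
  refine (abs_min_sub_min_le_max s b t b).trans ?_
  simp

lemma abs_sub_trR {b : ℝ} (hb : 0 ≤ b) (a : ℝ) : |a - trR b a| ≤ max (|a| - b) 0 := by
  rcases le_total a b with h1 | h1
  · rcases le_total (-b) a with h2 | h2
    · rw [trR_eq_self (abs_le.mpr ⟨h2, h1⟩)]; simp
    · have ht : trR b a = -b := by rw [trR, min_eq_left h1, max_eq_right h2]
      have ha : a ≤ 0 := h2.trans (by linarith)
      rw [ht, abs_of_nonpos (by linarith), abs_of_nonpos ha]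
      exact le_max_of_le_left (by linarith)
  · have ht : trR b a = b := by rw [trR, min_eq_right h1, max_eq_left (by linarith)]
    rw [ht, abs_of_nonneg (by linarith), abs_of_nonneg (hb.trans h1)]
    exact le_max_of_le_left (by linarith)

/-! ### Lattice operations in `R` -/

section RLattice
variable {R : Set C(X, ℝ)}
  (hadd : ∀ f g : C(X, ℝ), f ∈ R → g ∈ R → f + g ∈ R)
  (hsmul : ∀ (c : ℝ) (f : C(X, ℝ)), f ∈ R → c • f ∈ R)
  (habs : ∀ f : C(X, ℝ), f ∈ R → |f| ∈ R)

include hadd hsmul in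
lemma R_sub_mem {f g : C(X, ℝ)} (hf : f ∈ R) (hg : g ∈ R) : f - g ∈ R := by
  have := hadd f ((-1 : ℝ) • g) hf (hsmul _ _ hg)
  simpa [sub_eq_add_neg] using this

include hadd hsmul habs in
lemma R_sup_mem {f g : C(X, ℝ)} (hf : f ∈ R) (hg : g ∈ R) : f ⊔ g ∈ R := by
  rw [sup_eq_half_smul_add_add_abs_sub' ℝ]
  exact hsmul _ _ (hadd _ _ (hadd _ _ hf hg) (habs _ (R_sub_mem hadd hsmul hg hf)))

include hadd hsmul habs in
lemma R_inf_mem {f g : C(X, ℝ)} (hf : f ∈ R) (hg : g ∈ R) : f ⊓ g ∈ R := by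
  rw [inf_eq_half_smul_add_sub_abs_sub' ℝ]
  exact hsmul _ _ (R_sub_mem hadd hsmul (hadd _ _ hf hg) (habs _ (R_sub_mem hadd hsmul hg hf)))

include hadd hsmul habs in
lemma R_trunc_mem {f p : C(X, ℝ)} (hf : f ∈ R) (hp : p ∈ R) : (f ⊓ p) ⊔ (-p) ∈ R := by
  have : -p ∈ R := by simpa using hsmul (-1) p hp
  exact R_sup_mem hadd hsmul habs (R_inf_mem hadd hsmul habs hf hp) this

include hadd hsmul habs in
lemma kakutani_approx
    (hzero : (0 : C(X, ℝ)) ∈ R)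
    (hsep : ∀ x y : X, x ≠ y → ∃ s ∈ R, s x ≠ 0 ∧ s y = 0)
    (hnv : ∀ x : X, ∃ s ∈ R, s x ≠ 0)
    {K : Set X} (hK : IsCompact K) (h : C(X, ℝ)) {ε : ℝ} (hε : 0 < ε) :
    ∃ g ∈ R, ∀ x ∈ K, |g x - h x| ≤ ε := by
  haveI : CompactSpace ↥K := isCompact_iff_compactSpace.mp hK
  set L : Set C(↥K, ℝ) := (fun f : C(X, ℝ) => f.restrict K) '' R with hLdef
  have inf_mem : ∀ f ∈ L, ∀ g ∈ L, f ⊓ g ∈ L := by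
    rintro _ ⟨f, hf, rfl⟩ _ ⟨g, hg, rfl⟩
    refine ⟨f ⊓ g, R_inf_mem hadd hsmul habs hf hg, ?_⟩
    ext x; simp [ContinuousMap.restrict_apply]
  have sup_mem : ∀ f ∈ L, ∀ g ∈ L, f ⊔ g ∈ L := by
    rintro _ ⟨f, hf, rfl⟩ _ ⟨g, hg, rfl⟩
    refine ⟨f ⊔ g, R_sup_mem hadd hsmul habs hf hg, ?_⟩
    ext x; simp [ContinuousMap.restrict_apply]
  have sep : L.SeparatesPointsStrongly := by
    intro v x y
    by_cases hxy : (x : X) = (y : X)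
    · have hyx : x = y := Subtype.ext hxy
      subst hyx
      obtain ⟨s, hsR, hs⟩ := hnv (x : X)
      refine ⟨((v x / s x) • s).restrict K, ⟨_, hsmul _ _ hsR, rfl⟩, ?_, ?_⟩ <;>
        simp [ContinuousMap.restrict_apply, div_mul_cancel₀ _ hs]
    · obtain ⟨s₁, hs₁R, hs₁x, hs₁y⟩ := hsep _ _ hxy
      obtain ⟨s₂, hs₂R, hs₂y, hs₂x⟩ := hsep _ _ (Ne.symm hxy)
      refine ⟨((v x / s₁ x) • s₁ + (v y / s₂ y) • s₂).restrict K,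
        ⟨_, hadd _ _ (hsmul _ _ hs₁R) (hsmul _ _ hs₂R), rfl⟩, ?_, ?_⟩ <;>
        simp [ContinuousMap.restrict_apply, hs₁y, hs₂x, div_mul_cancel₀ _ hs₁x,
          div_mul_cancel₀ _ hs₂y]
  have hclos : closure L = ⊤ :=
    ContinuousMap.sublattice_closure_eq_top L ⟨_, ⟨0, hzero, rfl⟩⟩ inf_mem sup_mem sep
  have hmem : h.restrict K ∈ closure L := by rw [hclos]; trivial
  obtain ⟨b, hbL, hbd⟩ := Metric.mem_closure_iff.mp hmem ε hε
  obtain ⟨g, hgR, rfl⟩ := hbL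
  refine ⟨g, hgR, fun x hx => ?_⟩
  have := (ContinuousMap.dist_lt_iff hε).mp hbd ⟨x, hx⟩
  rw [ContinuousMap.restrict_apply, ContinuousMap.restrict_apply, Real.dist_eq] at this
  rw [abs_sub_comm]
  exact this.le

end RLattice

lemma sigmaCompact_of_lindelof [WeaklyLocallyCompactSpace X] [LindelofSpace X] :
    SigmaCompactSpace X := by
  rcases isEmpty_or_nonempty X with hX | hX
  · refine ⟨⟨fun _ => ∅, fun _ => isCompact_empty, ?_⟩⟩
    rw [Set.iUnion_empty, Set.univ_eq_empty_iff.mpr hX]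
  · choose Kf hKc hKn using fun x : X => exists_compact_mem_nhds x
    obtain ⟨c, hcc, hcov⟩ := isLindelof_univ.elim_countable_subcover
      (fun x : X => interior (Kf x)) (fun _ => isOpen_interior)
      (fun x _ => Set.mem_iUnion.mpr ⟨x, mem_interior_iff_mem_nhds.mpr (hKn x)⟩)
    have hcne : c.Nonempty := by
      rcases Set.eq_empty_or_nonempty c with rfl | hne
      · exfalso
        have := hcov (Set.mem_univ hX.some)
        simpa using this
      · exact hne
    obtain ⟨f, hf⟩ := Set.Countable.exists_eq_range hcc hcne
    refine ⟨⟨fun n => Kf (f n), fun n => hKc _, ?_⟩⟩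
    apply Set.eq_univ_of_univ_subset
    intro y hy
    obtain ⟨x, hxc, hyx⟩ := Set.mem_iUnion₂.mp (hcov hy)
    rw [hf] at hxc
    obtain ⟨n, rfl⟩ := hxc
    exact Set.mem_iUnion.mpr ⟨n, interior_subset hyx⟩

theorem stone_weierstrass_riesz_ideal
    (X : Type*) [TopologicalSpace X] [LocallyCompactSpace X] [T2Space X] [LindelofSpace X]
    (I : Set C(X, ℝ)) (hI : IsRieszIdeal I)
    (R : Set C(X, ℝ)) (hRI : R ⊆ I)
    (hzero : (0 : C(X, ℝ)) ∈ R)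
    (hadd : ∀ f g : C(X, ℝ), f ∈ R → g ∈ R → f + g ∈ R)
    (hsmul : ∀ (c : ℝ) (f : C(X, ℝ)), f ∈ R → c • f ∈ R)
    (habs : ∀ f : C(X, ℝ), f ∈ R → |f| ∈ R)
    (hsep : ∀ x y : X, x ≠ y → ∃ s ∈ R, s x ≠ 0 ∧ s y = 0)
    (hnv : ∀ x : X, ∃ s ∈ R, s x ≠ 0) :
    IClosure I R = I := by
  obtain ⟨hI0, hIadd, hIsmul, hIdom⟩ := hI
  -- `I` is `I`-closed
  have hII : IClosed I I := by
    rintro g g' hgI ⟨f, hfI, ⟨hdec, hglb⟩, hconv⟩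
    obtain ⟨N, hN⟩ := hconv 0
    have hf0 : ∀ x, 0 ≤ f 0 x := fun x => (hglb x).1 ⟨0, rfl⟩
    have habsgN : |g N| ∈ I := hIdom _ _ (hgI N) (fun x => by simp)
    refine hIdom g' (f 0 + |g N|) (hIadd _ _ (hfI 0) habsgN) (fun x => ?_)
    have h1 := hN N le_rfl x
    have h2 : |g' x| - |g N x| ≤ |g' x - g N x| := abs_sub_abs_le_abs_sub _ _
    have h3 : |(f 0 + |g N|) x| = f 0 x + |g N x| := by
      have : (0:ℝ) ≤ f 0 x + |g N x| := by linarith [hf0 x, abs_nonneg (g N x)]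
      simp [abs_of_nonneg this]
    rw [h3]; linarith
  have main : ∀ C, C ⊆ I → R ⊆ C → IClosed I C → I ⊆ C := by
    intro C hCI hRC hCcl
    haveI : SigmaCompactSpace X := sigmaCompact_of_lindelof
    set K : CompactExhaustion X := CompactExhaustion.choice X with hK
    -- bump functions
    have hbump : ∀ n : ℕ, ∃ χ : C(X, ℝ), Set.EqOn χ 0 ((interior (K (n+1)))ᶜ) ∧
        Set.EqOn χ 1 (K n) ∧ ∀ x, χ x ∈ Set.Icc (0:ℝ) 1 := by
      intro n
      exact exists_continuous_zero_one_of_isClosed isOpen_interior.isClosed_compl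
        (K.isCompact n).isClosed
        (Set.disjoint_left.mpr fun x hx hxK => hx (K.subset_interior_succ n hxK))
    choose χ hχ0 hχ1 hχmem using hbump
    have hχmono : ∀ n x, χ n x ≤ χ (n+1) x := by
      intro n x
      by_cases hx : x ∈ interior (K (n+1))
      · have : χ (n+1) x = 1 := hχ1 (n+1) (interior_subset hx)
        rw [this]; exact (hχmem n x).2
      · have : χ n x = 0 := hχ0 n hx
        rw [this]; exact (hχmem (n+1) x).1
    -- functions in R that are ≥ 1 on K n
    have hψex : ∀ n : ℕ, ∃ ψ ∈ R, (∀ x, 0 ≤ ψ x) ∧ ∀ x ∈ K n, 1 ≤ ψ x := by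
      intro n
      choose S hSR hSx using hnv
      set s' : X → C(X, ℝ) := fun x => (2 / |S x x|) • S x with hs'
      have hs'x : ∀ x : X, 1 < |s' x x| := by
        intro x
        have h0 : |S x x| ≠ 0 := abs_ne_zero.mpr (hSx x)
        have h0' : (0:ℝ) < |S x x| := abs_pos.mpr (hSx x)
        rw [hs']
        simp only [ContinuousMap.smul_apply, smul_eq_mul, abs_mul, abs_div, abs_two, abs_abs]
        rw [div_mul_cancel₀ _ h0]
        norm_num
      obtain ⟨t, htK, htcov⟩ := (K.isCompact n).elim_nhds_subcover
        (fun x => {y | 1 < |s' x y|})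
        (fun x _ => (((s' x).continuous.abs).isOpen_preimage (Set.Ioi 1)
          isOpen_Ioi).mem_nhds (hs'x x))
      refine ⟨∑ x ∈ t, |s' x|, ?_, ?_, ?_⟩
      · exact Finset.sum_induction _ (· ∈ R) (fun a b ha hb => hadd a b ha hb) hzero
          (fun x _ => habs _ (hsmul _ _ (hSR x)))
      · intro y
        simp only [ContinuousMap.coe_sum, Finset.sum_apply]
        exact Finset.sum_nonneg fun x _ => by simp [abs_nonneg]
      · intro y hy
        obtain ⟨x, hxt, hxy⟩ := Set.mem_iUnion₂.mp (htcov hy)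
        have h1 : (1:ℝ) ≤ |s' x y| := le_of_lt hxy
        have h2 : |s' x| y ≤ ∑ z ∈ t, (|s' z|) y := by
          have : ∀ z ∈ t, (0:ℝ) ≤ (|s' z|) y := fun z _ => by simp [abs_nonneg]
          calc |s' x| y ≤ ∑ z ∈ t, (fun z => (|s' z|) y) z :=
                Finset.single_le_sum this hxt
            _ = ∑ z ∈ t, (|s' z|) y := rfl
        have h3 : (∑ z ∈ t, |s' z|) y = ∑ z ∈ t, (|s' z|) y := by
          simp [ContinuousMap.coe_sum, Finset.sum_apply]
        rw [h3]
        calc (1:ℝ) ≤ |s' x y| := h1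
          _ = |s' x| y := by simp
          _ ≤ _ := h2
    choose ψ hψR hψ0 hψ1 using hψex
    -- Stage 1
    have stage1 : ∀ p ∈ R, (∀ x, 0 ≤ p x) → ∀ h' : C(X, ℝ), (h' ⊓ p) ⊔ (-p) ∈ C := by
      intro p hpR hp0 h'
      set hp : C(X, ℝ) := (h' ⊓ p) ⊔ (-p) with hhp
      have hp_apply : ∀ x, hp x = trR (p x) (h' x) := by
        intro x; simp [hhp, trR]
      have happrox : ∀ n : ℕ, ∃ g ∈ R, ∀ x ∈ K n, |g x - hp x| ≤ (2⁻¹ : ℝ)^n :=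
        fun n => kakutani_approx hadd hsmul habs hzero hsep hnv (K.isCompact n) hp
          (by positivity)
      choose g hgR hg using happrox
      set q : C(X, ℝ) := (2:ℝ) • p with hqdef
      set w : ℕ → C(X, ℝ) := fun n => (g n ⊓ q) ⊔ (-q) with hwdef
      have hwR : ∀ n, w n ∈ R := fun n =>
        R_trunc_mem hadd hsmul habs (hgR n) (hsmul 2 p hpR)
      have hw_apply : ∀ n x, w n x = trR (2 * p x) (g n x) := by
        intro n x; simp [hwdef, hqdef, trR]
      have hhp_abs : ∀ x, |hp x| ≤ p x := fun x => by
        rw [hp_apply]; exact abs_trR_le (hp0 x) _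
      have key1 : ∀ n x, |w n x - hp x| ≤ |g n x - hp x| := by
        intro n x
        have h2p : |hp x| ≤ 2 * p x := (hhp_abs x).trans (by linarith [hp0 x])
        calc |w n x - hp x| = |trR (2 * p x) (g n x) - trR (2 * p x) (hp x)| := by
              rw [hw_apply n x, trR_eq_self h2p]
          _ ≤ |g n x - hp x| := abs_trR_sub_trR _ _ _
      have key2 : ∀ n x, |w n x - hp x| ≤ 3 * p x := by
        intro n x
        have h1 : |w n x| ≤ 2 * p x := by
          rw [hw_apply]; exact abs_trR_le (by linarith [hp0 x]) _
        have h2 := hhp_abs x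
        calc |w n x - hp x| ≤ |w n x| + |hp x| := abs_sub _ _
          _ ≤ 3 * p x := by linarith
      set f : ℕ → C(X, ℝ) := fun k =>
        ((3:ℝ) • p) ⊓ (ContinuousMap.const X ((2⁻¹:ℝ)^k)) +
          (3:ℝ) • (p * ((1 : C(X, ℝ)) - χ k)) with hfdef
      have hf_apply : ∀ k x, f k x = min (3 * p x) ((2⁻¹:ℝ)^k) + 3 * (p x * (1 - χ k x)) := by
        intro k x; simp [hfdef]
      have hterm2 : ∀ k x, 0 ≤ 3 * (p x * (1 - χ k x)) := by
        intro k x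
        have := (hχmem k x).2
        have := hp0 x
        nlinarith
      have hterm1 : ∀ k x, 0 ≤ min (3 * p x) ((2⁻¹:ℝ)^k) := by
        intro k x
        exact le_min (by linarith [hp0 x]) (by positivity)
      refine hCcl w hp (fun n => hRC (hwR n)) ⟨f, ?_, ⟨?_, ?_⟩, ?_⟩
      · intro k
        refine hIdom _ ((6:ℝ) • p) (hIsmul 6 p (hRI hpR)) (fun x => ?_)
        rw [hf_apply]
        have h6 : |((6:ℝ) • p) x| = 6 * p x := by
          rw [ContinuousMap.smul_apply, smul_eq_mul, abs_mul, abs_of_nonneg (hp0 x)]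
          norm_num
        have hnn := add_nonneg (hterm1 k x) (hterm2 k x)
        rw [h6, abs_of_nonneg hnn]
        have hm := min_le_left (3 * p x) ((2⁻¹:ℝ)^k)
        have hc := (hχmem k x).1
        have hpx := hp0 x
        nlinarith
      · intro k
        rw [ContinuousMap.le_def]
        intro x
        rw [hf_apply, hf_apply]
        have hpow : ((2⁻¹:ℝ))^(k+1) ≤ (2⁻¹)^k :=
          pow_le_pow_of_le_one (by norm_num) (by norm_num) (Nat.le_succ k)
        have hmin : min (3 * p x) ((2⁻¹:ℝ)^(k+1)) ≤ min (3 * p x) ((2⁻¹:ℝ)^k) :=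
          min_le_min le_rfl hpow
        have hmul : p x * (1 - χ (k+1) x) ≤ p x * (1 - χ k x) :=
          mul_le_mul_of_nonneg_left (by linarith [hχmono k x]) (hp0 x)
        linarith
      · intro x
        constructor
        · rintro y ⟨k, rfl⟩
          dsimp only
          rw [hf_apply]
          exact add_nonneg (hterm1 k x) (hterm2 k x)
        · intro l hl
          by_contra hlpos
          push_neg at hlpos
          obtain ⟨m, hm⟩ := K.exists_mem x
          obtain ⟨k0, hk0⟩ := exists_pow_lt_of_lt_one hlpos (by norm_num : (2⁻¹:ℝ) < 1)
          set k := max m k0 with hkdef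
          have hχk : χ k x = 1 := hχ1 k (K.subset (le_max_left m k0) hm)
          have hfk : f k x ≤ (2⁻¹:ℝ)^k := by
            rw [hf_apply, hχk]
            simp only [sub_self, mul_zero, add_zero]
            exact min_le_right _ _
          have hlk : l ≤ f k x := hl ⟨k, rfl⟩
          have hpk : ((2⁻¹:ℝ))^k ≤ (2⁻¹)^k0 :=
            pow_le_pow_of_le_one (by norm_num) (by norm_num) (le_max_right m k0)
          linarith
      · intro k
        refine ⟨k + 1, fun n hn x => ?_⟩
        rw [abs_sub_comm, hf_apply]
        by_cases hx : x ∈ interior (K (k+1))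
        · have hxKn : x ∈ K n := K.subset hn (interior_subset hx)
          have hkn : k ≤ n := le_trans (Nat.le_succ k) hn
          have h1 : |w n x - hp x| ≤ (2⁻¹:ℝ)^n := (key1 n x).trans (hg n x hxKn)
          have h1' : |w n x - hp x| ≤ (2⁻¹:ℝ)^k :=
            h1.trans (pow_le_pow_of_le_one (by norm_num) (by norm_num) hkn)
          have h2 := key2 n x
          have := hterm2 k x
          have hmin : |w n x - hp x| ≤ min (3 * p x) ((2⁻¹:ℝ)^k) := le_min h2 h1'
          linarith
        · have hχ0x : χ k x = 0 := hχ0 k hx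
          have h2 := key2 n x
          have h1 := hterm1 k x
          rw [hχ0x]
          have he : (3:ℝ) * (p x * (1 - 0)) = 3 * p x := by ring
          rw [he]
          linarith
    -- Stage 2
    intro h hh
    set p' : ℕ → C(X, ℝ) := fun k => ∑ j ∈ Finset.range (k+1), ψ j with hp'def
    have hp'R : ∀ k, p' k ∈ R :=
      fun k => Finset.sum_induction _ (· ∈ R) (fun a b ha hb => hadd a b ha hb) hzero
        (fun j _ => hψR j)
    have hp'_apply : ∀ k x, p' k x = ∑ j ∈ Finset.range (k+1), ψ j x := by
      intro k x; simp [hp'def, ContinuousMap.coe_sum, Finset.sum_apply]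
    have hp'0 : ∀ k x, 0 ≤ p' k x := by
      intro k x; rw [hp'_apply]
      exact Finset.sum_nonneg fun j _ => hψ0 j x
    have hp'mono : ∀ k n, k ≤ n → ∀ x, p' k x ≤ p' n x := by
      intro k n hkn x
      rw [hp'_apply, hp'_apply]
      exact Finset.sum_le_sum_of_subset_of_nonneg
        (Finset.range_subset_range.mpr (by omega)) (fun j _ _ => hψ0 j x)
    have hbig : ∀ x, ∃ k, |h x| ≤ p' k x := by
      intro x
      obtain ⟨m, hm⟩ := K.exists_mem x
      set n := ⌈|h x|⌉₊ with hn
      refine ⟨m + n, ?_⟩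
      have hIco : Finset.Ico m (m + n + 1) ⊆ Finset.range (m + n + 1) := by
        intro j hj
        rw [Finset.mem_Ico] at hj
        exact Finset.mem_range.mpr hj.2
      have h1 : ∀ j ∈ Finset.Ico m (m + n + 1), (1:ℝ) ≤ ψ j x := by
        intro j hj
        rw [Finset.mem_Ico] at hj
        exact hψ1 j x (K.subset hj.1 hm)
      have h2 : ((n:ℝ) + 1) ≤ ∑ j ∈ Finset.Ico m (m + n + 1), ψ j x := by
        have hcard : (Finset.Ico m (m + n + 1)).card = n + 1 := by
          rw [Nat.card_Ico]; omega
        calc ((n:ℝ) + 1) = (Finset.Ico m (m + n + 1)).card • (1:ℝ) := by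
              rw [hcard]; push_cast; ring
          _ ≤ ∑ j ∈ Finset.Ico m (m + n + 1), ψ j x := Finset.card_nsmul_le_sum _ _ _ h1
      have h3 : ∑ j ∈ Finset.Ico m (m + n + 1), ψ j x ≤ p' (m + n) x := by
        rw [hp'_apply]
        exact Finset.sum_le_sum_of_subset_of_nonneg hIco (fun j _ _ => hψ0 j x)
      have h4 : |h x| ≤ (n:ℝ) := Nat.le_ceil _
      linarith
    set g2 : ℕ → C(X, ℝ) := fun n => (h ⊓ p' n) ⊔ (-(p' n)) with hg2def
    have hg2C : ∀ n, g2 n ∈ C := fun n => stage1 (p' n) (hp'R n) (hp'0 n) h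
    have hg2_apply : ∀ n x, g2 n x = trR (p' n x) (h x) := by
      intro n x; simp [hg2def, trR]
    set f2 : ℕ → C(X, ℝ) := fun k => (|h| - p' k) ⊔ 0 with hf2def
    have hf2_apply : ∀ k x, f2 k x = max (|h x| - p' k x) 0 := by
      intro k x; simp [hf2def]
    have habsh : |h| ∈ I := hIdom _ _ hh (fun x => by simp)
    refine hCcl g2 h hg2C ⟨f2, ?_, ⟨?_, ?_⟩, ?_⟩
    · intro k
      refine hIdom _ |h| habsh (fun x => ?_)
      rw [hf2_apply]
      have h1 : max (|h x| - p' k x) 0 ≤ |h x| := by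
        apply max_le
        · linarith [hp'0 k x]
        · exact abs_nonneg _
      have h2 : (0:ℝ) ≤ max (|h x| - p' k x) 0 := le_max_right _ _
      rw [abs_of_nonneg h2]
      simpa using h1
    · intro k
      rw [ContinuousMap.le_def]
      intro x
      rw [hf2_apply, hf2_apply]
      exact max_le_max (by linarith [hp'mono k (k+1) (Nat.le_succ k) x]) le_rfl
    · intro x
      constructor
      · rintro y ⟨k, rfl⟩
        dsimp only
        rw [hf2_apply]
        exact le_max_right _ _
      · intro l hl
        obtain ⟨k0, hk0⟩ := hbig x
        have h5 : l ≤ f2 k0 x := hl ⟨k0, rfl⟩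
        have hz : f2 k0 x = 0 := by
          rw [hf2_apply]
          exact max_eq_right (by linarith)
        linarith
    · intro k
      refine ⟨k, fun n hn x => ?_⟩
      rw [hg2_apply, hf2_apply]
      calc |h x - trR (p' n x) (h x)| ≤ max (|h x| - p' n x) 0 :=
            abs_sub_trR (hp'0 n x) _
        _ ≤ max (|h x| - p' k x) 0 :=
            max_le_max (by linarith [hp'mono k n hn x]) le_rfl
  apply Set.Subset.antisymm
  · exact Set.sInter_subset_of_mem ⟨Set.Subset.rfl, hRI, hII⟩
  · intro h hh
    rw [IClosure, Set.mem_sInter]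
    rintro C ⟨hCI, hRC, hCcl⟩
    exact main C hCI hRC hCcl hh
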